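/- Subadditivity under products: for all E ⊆ ℝ^m and F ⊆ ℝ^n, \overline{dim}_GB (E × F) ≤ \overline{dim}_GB E + \overline{dim}_GB F, where E × F ⊆ ℝ^{m+n} is the Cartesian product. -/

import Mathlib

open Filter Metric Set Topology Bornology ENNReal

noncomputable section

variable {X : Type*} [PseudoMetricSpace X]

/-- `coveringNumber r E` is the smallest number of closed balls of radius `r`
needed to cover `E` (with value `⊤` if no finite cover exists). -/
def coveringNumber (r : ℝ) (E : Set X) : ℕ∞ :=
  sInf {n : ℕ∞ | ∃ t : Finset X, (E ⊆ ⋃ x ∈ t, closedBall x r) ∧ (t.card : ℕ∞) = n}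

/-- The Assouad spectrum `dim_A^θ F`. -/
def assouadSpectrum (θ : ℝ) (F : Set X) : ℝ :=
  sInf {s : ℝ | 0 ≤ s ∧ ∃ C > (0 : ℝ), ∀ R : ℝ, 0 < R → R < 1 → ∀ x ∈ F,
    (coveringNumber (R ^ (1 / θ)) (closedBall x R ∩ F) : ℝ≥0∞)
      ≤ ENNReal.ofReal (C * (R / R ^ (1 / θ)) ^ s)}

/-- The upper spectrum `\overline{dim}_A^θ F`. -/
def upperSpectrum (θ : ℝ) (F : Set X) : ℝ :=
  sInf {s : ℝ | 0 ≤ s ∧ ∃ C > (0 : ℝ), ∀ r R : ℝ, 0 < r → r ≤ R ^ (1 / θ) →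
    R ^ (1 / θ) < R → R < 1 → 0 < R → ∀ x ∈ F,
    (coveringNumber r (closedBall x R ∩ F) : ℝ≥0∞) ≤ ENNReal.ofReal (C * (R / r) ^ s)}

/-- The generalized upper box dimension `\overline{dim}_{GB} F := limsup_{θ → 0⁺} dim_A^θ F`. -/
def genUpperBoxDim (F : Set X) : ℝ :=
  limsup (fun θ : ℝ => assouadSpectrum θ F) (𝓝[>] (0 : ℝ))

/-- The quasi-Assouad dimension `dim_{qA} F := lim_{θ → 1⁻} \overline{dim}_A^θ F`
(the limit exists by monotonicity, hence equals the limsup). -/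
def quasiAssouadDim (F : Set X) : ℝ :=
  limsup (fun θ : ℝ => upperSpectrum θ F) (𝓝[<] (1 : ℝ))

/-- The upper box dimension `\overline{dim}_B F := limsup_{δ → 0⁺} log N_δ(F) / (- log δ)`. -/
def upperBoxDim (F : Set X) : ℝ :=
  limsup (fun δ : ℝ => Real.log ((coveringNumber δ F).toNat : ℝ) / (- Real.log δ))
    (𝓝[>] (0 : ℝ))

/-- The Assouad dimension `dim_A F`. -/
def assouadDim (F : Set X) : ℝ :=
  sInf {s : ℝ | 0 ≤ s ∧ ∃ C > (0 : ℝ), ∃ ρ > (0 : ℝ), ∀ r R : ℝ, 0 < r → r < R → R < ρ →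
    ∀ x ∈ F, (coveringNumber r (closedBall x R ∩ F) : ℝ≥0∞) ≤ ENNReal.ofReal (C * (R / r) ^ s)}

/-- The packing pre-measure at scale `δ`: the supremum of `∑ |B_i|^s` over at most countable
collections of disjoint closed balls of radii at most `δ` (and positive) with centres in `F`,
where `|B_i| = 2 r_i` is the diameter. -/
def packingPre (s δ : ℝ) (F : Set X) : ℝ≥0∞ :=
  ⨆ (D : Set (X × ℝ)) (_ : D.Countable)
    (_ : ∀ p ∈ D, p.1 ∈ F ∧ 0 < p.2 ∧ p.2 ≤ δ)
    (_ : D.Pairwise fun p q => Disjoint (closedBall p.1 p.2) (closedBall q.1 q.2)),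
    ∑' p : D, ENNReal.ofReal ((2 * (p : X × ℝ).2) ^ s)

/-- `𝒫₀^s(F) := lim_{δ → 0} 𝒫_δ^s(F)`; the limit exists by monotonicity and equals the inf. -/
def packingPre₀ (s : ℝ) (F : Set X) : ℝ≥0∞ :=
  ⨅ (δ : ℝ) (_ : 0 < δ), packingPre s δ F

/-- The packing (outer) measure `𝒫^s(F)`. -/
def packingMeasure (s : ℝ) (F : Set X) : ℝ≥0∞ :=
  ⨅ (G : ℕ → Set X) (_ : F ⊆ ⋃ i, G i), ∑' i, packingPre₀ s (G i)

/-- The packing dimension `dim_P F = inf {s ≥ 0 : 𝒫^s(F) = 0}`. -/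
def packingDim (F : Set X) : ℝ :=
  sInf {s : ℝ | 0 ≤ s ∧ packingMeasure s F = 0}



/-! ### Auxiliary lemmas -/

lemma coveringNumber_mono {r : ℝ} {E F : Set X} (h : E ⊆ F) :
    coveringNumber r E ≤ coveringNumber r F :=
  sInf_le_sInf fun _ ⟨t, ht, hc⟩ => ⟨t, h.trans ht, hc⟩

lemma coveringNumber_le_card {r : ℝ} {E : Set X} (t : Finset X)
    (ht : E ⊆ ⋃ x ∈ t, closedBall x r) : coveringNumber r E ≤ t.card :=
  sInf_le ⟨t, ht, rfl⟩

lemma exists_cover_of_coveringNumber_lt_top {r : ℝ} {E : Set X}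
    (h : coveringNumber r E < ⊤) :
    ∃ t : Finset X, (E ⊆ ⋃ x ∈ t, closedBall x r) ∧ (t.card : ℕ∞) = coveringNumber r E := by
  have hne : {n : ℕ∞ | ∃ t : Finset X,
      (E ⊆ ⋃ x ∈ t, closedBall x r) ∧ (t.card : ℕ∞) = n}.Nonempty := by
    by_contra h'
    rw [not_nonempty_iff_eq_empty] at h'
    rw [_root_.coveringNumber, h', sInf_empty] at h
    exact absurd h (lt_irrefl ⊤)
  exact csInf_mem hne

lemma exists_cover_of_le_ofReal {r c : ℝ} {E : Set X} (hc : 0 ≤ c)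
    (h : (coveringNumber r E : ℝ≥0∞) ≤ ENNReal.ofReal c) :
    ∃ t : Finset X, (E ⊆ ⋃ x ∈ t, closedBall x r) ∧ (t.card : ℝ) ≤ c := by
  have hlt : coveringNumber r E < ⊤ := by
    rcases eq_or_ne (coveringNumber r E) ⊤ with he | he
    · rw [he] at h; simp at h
    · exact lt_top_iff_ne_top.mpr he
  obtain ⟨t, ht, hcard⟩ := exists_cover_of_coveringNumber_lt_top hlt
  refine ⟨t, ht, ?_⟩
  rw [← hcard, ENat.toENNReal_coe] at h
  exact_mod_cast (ENNReal.le_ofReal_iff_toReal_le (by simp) hc).mp h |>.trans_eq rfl |>.trans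
    (by simp)

lemma exists_cover_of_le_nat {r : ℝ} {E : Set X} {D : ℕ}
    (h : coveringNumber r E ≤ (D : ℕ∞)) :
    ∃ t : Finset X, (E ⊆ ⋃ x ∈ t, closedBall x r) ∧ t.card ≤ D := by
  obtain ⟨t, ht, hcard⟩ := exists_cover_of_coveringNumber_lt_top
    (h.trans_lt (by exact_mod_cast lt_top_iff_ne_top.mpr (by simp)))
  exact ⟨t, ht, by exact_mod_cast hcard.le.trans h⟩

lemma euclidean_ball_cover (d : ℕ) (x : EuclideanSpace ℝ (Fin d)) {r R : ℝ}
    (hr : 0 < r) :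
    coveringNumber r (closedBall x R) ≤
      (((2 * (⌈R * Real.sqrt d / r⌉₊ + 1) + 1) ^ d : ℕ) : ℕ∞) := by
  classical
  rcases Nat.eq_zero_or_pos d with hd | hd
  · subst hd
    refine le_trans (coveringNumber_le_card {x} ?_) (by simp)
    intro y _
    have hyx : dist y x = 0 := by
      rw [EuclideanSpace.dist_eq]; simp
    exact mem_iUnion₂.mpr ⟨x, Finset.mem_singleton_self x, by
      rw [mem_closedBall, hyx]; exact hr.le⟩
  · have hd0 : (0:ℝ) < Real.sqrt d := Real.sqrt_pos.mpr (by exact_mod_cast hd)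
    set s : ℝ := r / Real.sqrt d with hs_def
    have hs : 0 < s := div_pos hr hd0
    set K : ℕ := ⌈R * Real.sqrt d / r⌉₊ + 1 with hK_def
    set I : Finset (Fin d → ℤ) := Fintype.piFinset fun _ => Finset.Icc (-(K:ℤ)) (K:ℤ) with hI_def
    set c : (Fin d → ℤ) → EuclideanSpace ℝ (Fin d) :=
      fun k => WithLp.toLp 2 (fun i => x i + k i * s : Fin d → ℝ) with hc_def
    refine le_trans (coveringNumber_le_card (I.image c) ?_) ?_
    · intro y hy
      rw [mem_closedBall] at hy
      have hRnn : 0 ≤ R := le_trans dist_nonneg hy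
      have hsum : (∑ i, dist (y i) (x i) ^ 2) ≤ R ^ 2 := by
        have h1 : Real.sqrt (∑ i, dist (y i) (x i) ^ 2) ≤ R := by
          rw [← EuclideanSpace.dist_eq]; exact hy
        have h2 : (0:ℝ) ≤ ∑ i, dist (y i) (x i) ^ 2 :=
          Finset.sum_nonneg fun i _ => sq_nonneg _
        calc (∑ i, dist (y i) (x i) ^ 2)
            = Real.sqrt (∑ i, dist (y i) (x i) ^ 2) ^ 2 := (Real.sq_sqrt h2).symm
          _ ≤ R ^ 2 := pow_le_pow_left₀ (Real.sqrt_nonneg _) h1 2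
      have hcoord : ∀ i, |y i - x i| ≤ R := by
        intro i
        have h1 : dist (y i) (x i) ^ 2 ≤ R ^ 2 :=
          le_trans (Finset.single_le_sum (fun j _ => sq_nonneg (dist (y j) (x j)))
            (Finset.mem_univ i)) hsum
        have h2 : dist (y i) (x i) ≤ R := by
          have := Real.sqrt_le_sqrt h1
          rwa [Real.sqrt_sq dist_nonneg, Real.sqrt_sq hRnn] at this
        rwa [Real.dist_eq] at h2
      set k : Fin d → ℤ := fun i => round ((y i - x i) / s) with hk_def
      have hk_mem : k ∈ I := by
        rw [hI_def, Fintype.mem_piFinset]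
        intro i
        rw [Finset.mem_Icc, ← abs_le]
        have h1 : |(y i - x i) / s| ≤ R * Real.sqrt d / r := by
          rw [abs_div, abs_of_pos hs, div_le_div_iff₀ hs hr]
          calc |y i - x i| * r ≤ R * r := mul_le_mul_of_nonneg_right (hcoord i) hr.le
            _ = R * Real.sqrt d * s := by rw [hs_def]; field_simp
        have h2 : |((k i : ℤ) : ℝ)| ≤ |(y i - x i) / s| + 1/2 := by
          have h3 := abs_sub_round ((y i - x i) / s)
          calc |((k i : ℤ) : ℝ)| = |(y i - x i)/s - ((y i - x i)/s - k i)| := by ring_nf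
            _ ≤ |(y i - x i)/s| + |(y i - x i)/s - k i| := abs_sub _ _
            _ ≤ |(y i - x i)/s| + 1/2 := by linarith [h3]
        have h4 : |((k i : ℤ) : ℝ)| < K := by
          have h5 : R * Real.sqrt d / r ≤ (⌈R * Real.sqrt d / r⌉₊ : ℝ) := Nat.le_ceil _
          have h6 : (K : ℝ) = (⌈R * Real.sqrt d / r⌉₊ : ℝ) + 1 := by rw [hK_def]; push_cast; ring
          linarith
        exact_mod_cast h4.le
      refine mem_iUnion₂.mpr ⟨c k, Finset.mem_image_of_mem c hk_mem, ?_⟩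
      rw [mem_closedBall, EuclideanSpace.dist_eq]
      have hterm : ∀ i, dist (y i) (c k i) ^ 2 ≤ (s/2) ^ 2 := by
        intro i
        have h0 : |(y i - x i) / s - k i| ≤ 1/2 := abs_sub_round _
        have h3 : |(y i - x i)/s - ((k i : ℤ) : ℝ)| * s = |y i - x i - k i * s| := by
          have he : (y i - x i)/s - ((k i : ℤ) : ℝ) = (y i - x i - k i * s) / s := by
            field_simp
          rw [he, abs_div, abs_of_pos hs, div_mul_cancel₀ _ hs.ne']
        have h1 : |y i - x i - k i * s| ≤ s / 2 := by
          have h2 : |(y i - x i) / s - ((k i : ℤ) : ℝ)| * s ≤ (1/2) * s :=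
            mul_le_mul_of_nonneg_right h0 hs.le
          rw [h3] at h2
          linarith
        have h4 : dist (y i) (c k i) = |y i - x i - k i * s| := by
          simp only [hc_def, Real.dist_eq, PiLp.toLp_apply]
          congr 1
          ring
        rw [h4]
        exact pow_le_pow_left₀ (abs_nonneg _) h1 2
      have hsum2 : (∑ i, dist (y i) (c k i) ^ 2) ≤ d * (s/2)^2 := by
        calc (∑ i, dist (y i) (c k i) ^ 2) ≤ ∑ _i : Fin d, (s/2)^2 :=
              Finset.sum_le_sum fun i _ => hterm i
          _ = d * (s/2)^2 := by
              rw [Finset.sum_const, Finset.card_univ, Fintype.card_fin, nsmul_eq_mul]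
      have hr2 : (d : ℝ) * (s/2)^2 ≤ r^2 := by
        have hdne : (d:ℝ) ≠ 0 := by positivity
        have hsq : s ^ 2 = r ^ 2 / d := by
          rw [hs_def, div_pow, Real.sq_sqrt (Nat.cast_nonneg d)]
        have heq : (d:ℝ) * (s/2)^2 = r^2/4 := by
          rw [div_pow, hsq]; field_simp; ring
        rw [heq]; nlinarith [sq_nonneg r]
      calc Real.sqrt (∑ i, dist (y i) (c k i) ^ 2) ≤ Real.sqrt (r^2) :=
            Real.sqrt_le_sqrt (hsum2.trans hr2)
        _ = r := Real.sqrt_sq hr.le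
    · have hIcard : I.card = (2 * K + 1) ^ d := by
        rw [hI_def, Fintype.card_piFinset]
        have h7 : (Finset.Icc (-(K:ℤ)) (K:ℤ)).card = 2 * K + 1 := by
          rw [Int.card_Icc]; omega
        simp [h7]
      have h8 : (I.image c).card ≤ (2 * K + 1) ^ d :=
        hIcard ▸ Finset.card_image_le (s := I) (f := c)
      exact_mod_cast h8

lemma euclidean_ball_cover_real (d : ℕ) (x : EuclideanSpace ℝ (Fin d)) {r R : ℝ}
    (hr : 0 < r) (hrR : r ≤ R) :
    (coveringNumber r (closedBall x R) : ℝ≥0∞) ≤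
      ENNReal.ofReal ((2 * Real.sqrt d + 7) ^ d * (R / r) ^ ((d:ℕ):ℝ)) := by
  have h1 := euclidean_ball_cover d x hr (R := R)
  have hR : 0 < R := lt_of_lt_of_le hr hrR
  have hRr : 1 ≤ R / r := (one_le_div hr).mpr hrR
  have h2 : ((2 * (⌈R * Real.sqrt d / r⌉₊ + 1) + 1 : ℕ) : ℝ)
      ≤ (2 * Real.sqrt d + 7) * (R / r) := by
    have hceil : (⌈R * Real.sqrt d / r⌉₊ : ℝ) ≤ R * Real.sqrt d / r + 1 :=
      (Nat.ceil_lt_add_one (by positivity)).le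
    have heq : R * Real.sqrt d / r = Real.sqrt d * (R / r) := by ring
    push_cast
    nlinarith [Real.sqrt_nonneg (d:ℝ), hRr, heq ▸ hceil]
  have h3 : (((2 * (⌈R * Real.sqrt d / r⌉₊ + 1) + 1) ^ d : ℕ) : ℝ)
      ≤ (2 * Real.sqrt d + 7) ^ d * (R / r) ^ ((d:ℕ):ℝ) := by
    rw [Real.rpow_natCast, ← mul_pow]
    exact_mod_cast pow_le_pow_left₀ (by positivity) h2 d
  calc (coveringNumber r (closedBall x R) : ℝ≥0∞)
      ≤ (((2 * (⌈R * Real.sqrt d / r⌉₊ + 1) + 1) ^ d : ℕ) : ℝ≥0∞) := by exact_mod_cast h1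
    _ = ENNReal.ofReal (((2 * (⌈R * Real.sqrt d / r⌉₊ + 1) + 1) ^ d : ℕ) : ℝ) := by
        rw [ENNReal.ofReal_natCast]
    _ ≤ _ := ENNReal.ofReal_le_ofReal h3

def specSet (θ : ℝ) (F : Set X) : Set ℝ :=
  {s : ℝ | 0 ≤ s ∧ ∃ C > (0 : ℝ), ∀ R : ℝ, 0 < R → R < 1 → ∀ x ∈ F,
    (coveringNumber (R ^ (1 / θ)) (closedBall x R ∩ F) : ℝ≥0∞)
      ≤ ENNReal.ofReal (C * (R / R ^ (1 / θ)) ^ s)}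

lemma assouadSpectrum_eq (θ : ℝ) (F : Set X) : assouadSpectrum θ F = sInf (specSet θ F) := rfl

lemma rpow_facts {θ R : ℝ} (hθ : 0 < θ) (hθ1 : θ ≤ 1) (hR0 : 0 < R) (hR1 : R < 1) :
    0 < R ^ (1/θ) ∧ R ^ (1/θ) ≤ R := by
  refine ⟨Real.rpow_pos_of_pos hR0 _, ?_⟩
  have h1 : (1:ℝ) ≤ 1/θ := by rw [le_div_iff₀ hθ]; linarith
  calc R ^ (1/θ) ≤ R ^ (1:ℝ) := Real.rpow_le_rpow_of_exponent_ge hR0 hR1.le h1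
    _ = R := Real.rpow_one R

lemma dim_mem_specSet (d : ℕ) (F : Set (EuclideanSpace ℝ (Fin d))) {θ : ℝ}
    (hθ : 0 < θ) (hθ1 : θ ≤ 1) {s : ℝ} (hds : (d:ℝ) ≤ s) :
    s ∈ specSet θ F := by
  refine ⟨le_trans (Nat.cast_nonneg d) hds, (2*Real.sqrt d + 7)^d, by positivity, ?_⟩
  intro R hR0 hR1 x hx
  obtain ⟨hr0, hrR⟩ := rpow_facts hθ hθ1 hR0 hR1
  have hRr : 1 ≤ R / R^(1/θ) := (one_le_div hr0).mpr hrR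
  calc (coveringNumber (R^(1/θ)) (closedBall x R ∩ F) : ℝ≥0∞)
      ≤ (coveringNumber (R^(1/θ)) (closedBall x R) : ℝ≥0∞) := by
        exact_mod_cast coveringNumber_mono inter_subset_left
    _ ≤ ENNReal.ofReal ((2*Real.sqrt d + 7)^d * (R/R^(1/θ)) ^ ((d:ℕ):ℝ)) :=
        euclidean_ball_cover_real d x hr0 hrR
    _ ≤ ENNReal.ofReal ((2*Real.sqrt d + 7)^d * (R/R^(1/θ)) ^ s) := by
        apply ENNReal.ofReal_le_ofReal
        exact mul_le_mul_of_nonneg_left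
          (Real.rpow_le_rpow_of_exponent_le hRr hds) (by positivity)

lemma assouadSpectrum_nonneg (θ : ℝ) (F : Set X) : 0 ≤ assouadSpectrum θ F :=
  Real.sInf_nonneg fun _ hs => hs.1

lemma assouadSpectrum_le_dim (d : ℕ) (F : Set (EuclideanSpace ℝ (Fin d))) {θ : ℝ}
    (hθ : 0 < θ) (hθ1 : θ ≤ 1) : assouadSpectrum θ F ≤ d := by
  rw [assouadSpectrum_eq]
  exact csInf_le ⟨0, fun x hx => hx.1⟩ (dim_mem_specSet d F hθ hθ1 le_rfl)

lemma add_pos_mem_specSet (d : ℕ) (F : Set (EuclideanSpace ℝ (Fin d))) {θ : ℝ}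
    (hθ : 0 < θ) (hθ1 : θ ≤ 1) {ε : ℝ} (hε : 0 < ε) :
    assouadSpectrum θ F + ε ∈ specSet θ F := by
  have hne : (specSet θ F).Nonempty := ⟨d, dim_mem_specSet d F hθ hθ1 le_rfl⟩
  obtain ⟨s₀, hs₀, hlt⟩ := Real.lt_sInf_add_pos hne hε
  rw [← assouadSpectrum_eq] at hlt
  obtain ⟨hs₀0, C, hC, hbound⟩ := hs₀
  refine ⟨le_trans hs₀0 hlt.le, C, hC, ?_⟩
  intro R hR0 hR1 x hx
  obtain ⟨hr0, hrR⟩ := rpow_facts hθ hθ1 hR0 hR1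
  have hRr : 1 ≤ R / R^(1/θ) := (one_le_div hr0).mpr hrR
  refine (hbound R hR0 hR1 x hx).trans (ENNReal.ofReal_le_ofReal ?_)
  exact mul_le_mul_of_nonneg_left (Real.rpow_le_rpow_of_exponent_le hRr hlt.le) hC.le

def projL (m n : ℕ) (z : EuclideanSpace ℝ (Fin (m+n))) : EuclideanSpace ℝ (Fin m) :=
  WithLp.toLp 2 (fun i => z (Fin.castAdd n i))

def projR (m n : ℕ) (z : EuclideanSpace ℝ (Fin (m+n))) : EuclideanSpace ℝ (Fin n) :=
  WithLp.toLp 2 (fun j => z (Fin.natAdd m j))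

def embedPair (m n : ℕ) (x : EuclideanSpace ℝ (Fin m)) (y : EuclideanSpace ℝ (Fin n)) :
    EuclideanSpace ℝ (Fin (m+n)) :=
  WithLp.toLp 2 (fun i => Fin.addCases (motive := fun _ => ℝ) x y i)

lemma projL_embed (m n : ℕ) (x : EuclideanSpace ℝ (Fin m)) (y : EuclideanSpace ℝ (Fin n)) :
    projL m n (embedPair m n x y) = x := by
  refine PiLp.ext fun i => ?_; simp [projL, embedPair]

lemma projR_embed (m n : ℕ) (x : EuclideanSpace ℝ (Fin m)) (y : EuclideanSpace ℝ (Fin n)) :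
    projR m n (embedPair m n x y) = y := by
  refine PiLp.ext fun j => ?_; simp [projR, embedPair]

lemma dist_sq_decomp (m n : ℕ) (z w : EuclideanSpace ℝ (Fin (m+n))) :
    dist z w ^ 2
      = dist (projL m n z) (projL m n w) ^ 2 + dist (projR m n z) (projR m n w) ^ 2 := by
  rw [EuclideanSpace.dist_eq, EuclideanSpace.dist_eq, EuclideanSpace.dist_eq,
    Real.sq_sqrt (Finset.sum_nonneg fun i _ => sq_nonneg _),
    Real.sq_sqrt (Finset.sum_nonneg fun i _ => sq_nonneg _),
    Real.sq_sqrt (Finset.sum_nonneg fun i _ => sq_nonneg _)]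
  exact Fin.sum_univ_add (fun i => dist (z i) (w i) ^ 2)

lemma dist_projL_le (m n : ℕ) (z w : EuclideanSpace ℝ (Fin (m+n))) :
    dist (projL m n z) (projL m n w) ≤ dist z w := by
  have h := dist_sq_decomp m n z w
  have h1 : dist (projL m n z) (projL m n w) ^ 2 ≤ dist z w ^ 2 := by
    nlinarith [sq_nonneg (dist (projR m n z) (projR m n w))]
  calc dist (projL m n z) (projL m n w)
      = Real.sqrt (dist (projL m n z) (projL m n w) ^ 2) := (Real.sqrt_sq dist_nonneg).symm
    _ ≤ Real.sqrt (dist z w ^ 2) := Real.sqrt_le_sqrt h1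
    _ = dist z w := Real.sqrt_sq dist_nonneg

lemma dist_projR_le (m n : ℕ) (z w : EuclideanSpace ℝ (Fin (m+n))) :
    dist (projR m n z) (projR m n w) ≤ dist z w := by
  have h := dist_sq_decomp m n z w
  have h1 : dist (projR m n z) (projR m n w) ^ 2 ≤ dist z w ^ 2 := by
    nlinarith [sq_nonneg (dist (projL m n z) (projL m n w))]
  calc dist (projR m n z) (projR m n w)
      = Real.sqrt (dist (projR m n z) (projR m n w) ^ 2) := (Real.sqrt_sq dist_nonneg).symm
    _ ≤ Real.sqrt (dist z w ^ 2) := Real.sqrt_le_sqrt h1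
    _ = dist z w := Real.sqrt_sq dist_nonneg

lemma dist_le_two_mul (m n : ℕ) {r : ℝ} (hr : 0 ≤ r) (z w : EuclideanSpace ℝ (Fin (m+n)))
    (h1 : dist (projL m n z) (projL m n w) ≤ r) (h2 : dist (projR m n z) (projR m n w) ≤ r) :
    dist z w ≤ 2 * r := by
  have h := dist_sq_decomp m n z w
  have h3 : dist z w ^ 2 ≤ (2*r)^2 := by
    nlinarith [dist_nonneg (x := projL m n z) (y := projL m n w),
      dist_nonneg (x := projR m n z) (y := projR m n w)]
  calc dist z w = Real.sqrt (dist z w ^ 2) := (Real.sqrt_sq dist_nonneg).symm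
    _ ≤ Real.sqrt ((2*r)^2) := Real.sqrt_le_sqrt h3
    _ = 2*r := Real.sqrt_sq (by positivity)

lemma prod_mem_specSet (m n : ℕ) (E : Set (EuclideanSpace ℝ (Fin m)))
    (F : Set (EuclideanSpace ℝ (Fin n))) {θ : ℝ} (hθ : 0 < θ) (hθ1 : θ ≤ 1)
    {s₁ s₂ : ℝ} (hs₁ : s₁ ∈ specSet θ E) (hs₂ : s₂ ∈ specSet θ F) :
    s₁ + s₂ ∈ specSet θ {z : EuclideanSpace ℝ (Fin (m + n)) |
        ((WithLp.toLp 2 (fun i => z (Fin.castAdd n i)) : EuclideanSpace ℝ (Fin m)) ∈ E) ∧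
        ((WithLp.toLp 2 (fun j => z (Fin.natAdd m j)) : EuclideanSpace ℝ (Fin n)) ∈ F)} := by
  classical
  set P : Set (EuclideanSpace ℝ (Fin (m + n))) := {z : EuclideanSpace ℝ (Fin (m + n)) |
        ((WithLp.toLp 2 (fun i => z (Fin.castAdd n i)) : EuclideanSpace ℝ (Fin m)) ∈ E) ∧
        ((WithLp.toLp 2 (fun j => z (Fin.natAdd m j)) : EuclideanSpace ℝ (Fin n)) ∈ F)} with hP_def
  obtain ⟨hs₁0, C₁, hC₁, hb₁⟩ := hs₁
  obtain ⟨hs₂0, C₂, hC₂, hb₂⟩ := hs₂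
  set D : ℕ := (2 * (⌈2 * Real.sqrt ((m+n : ℕ))⌉₊ + 1) + 1) ^ (m+n) with hD_def
  have hDpos : (0:ℝ) < D := by
    rw [hD_def]; positivity
  refine ⟨by linarith, C₁ * C₂ * D, by positivity, ?_⟩
  intro R hR0 hR1 z₀ hz₀
  obtain ⟨hr0, hrR⟩ := rpow_facts hθ hθ1 hR0 hR1
  set r : ℝ := R ^ (1/θ) with hr_def
  have hRrpos : 0 < R / r := div_pos hR0 hr0
  obtain ⟨t₁, ht₁, hcard₁⟩ := exists_cover_of_le_ofReal
    (by positivity) (hb₁ R hR0 hR1 (projL m n z₀) hz₀.1)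
  obtain ⟨t₂, ht₂, hcard₂⟩ := exists_cover_of_le_ofReal
    (by positivity) (hb₂ R hR0 hR1 (projR m n z₀) hz₀.2)
  have hu : ∀ p : EuclideanSpace ℝ (Fin m) × EuclideanSpace ℝ (Fin n),
      ∃ u : Finset (EuclideanSpace ℝ (Fin (m+n))),
        (closedBall (embedPair m n p.1 p.2) (2*r) ⊆ ⋃ c ∈ u, closedBall c r) ∧
          u.card ≤ D := by
    intro p
    apply exists_cover_of_le_nat
    have h := euclidean_ball_cover (m+n) (embedPair m n p.1 p.2) hr0 (R := 2*r)
    have he : 2 * r * Real.sqrt ((m+n : ℕ)) / r = 2 * Real.sqrt ((m+n : ℕ)) := by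
      field_simp
    rwa [he] at h
  choose u hu1 hu2 using hu
  set T : Finset (EuclideanSpace ℝ (Fin (m+n))) :=
    (t₁ ×ˢ t₂).biUnion (fun p => u p) with hT_def
  have hcov : closedBall z₀ R ∩ P ⊆ ⋃ c ∈ T, closedBall c r := by
    intro z hz
    have hzP : z ∈ P := hz.2
    have hzL : projL m n z ∈ closedBall (projL m n z₀) R ∩ E :=
      ⟨mem_closedBall.mpr ((dist_projL_le m n z z₀).trans (mem_closedBall.mp hz.1)), hzP.1⟩
    have hzR : projR m n z ∈ closedBall (projR m n z₀) R ∩ F :=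
      ⟨mem_closedBall.mpr ((dist_projR_le m n z z₀).trans (mem_closedBall.mp hz.1)), hzP.2⟩
    obtain ⟨c₁, hc₁t, hc₁⟩ := mem_iUnion₂.mp (ht₁ hzL)
    obtain ⟨c₂, hc₂t, hc₂⟩ := mem_iUnion₂.mp (ht₂ hzR)
    have hz2r : z ∈ closedBall (embedPair m n c₁ c₂) (2*r) := by
      rw [mem_closedBall]
      refine dist_le_two_mul m n hr0.le z (embedPair m n c₁ c₂) ?_ ?_
      · rw [projL_embed]
        exact mem_closedBall.mp hc₁
      · rw [projR_embed]
        exact mem_closedBall.mp hc₂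
    obtain ⟨c, hct, hc⟩ := mem_iUnion₂.mp (hu1 (c₁, c₂) hz2r)
    exact mem_iUnion₂.mpr ⟨c, Finset.mem_biUnion.mpr
      ⟨(c₁, c₂), Finset.mem_product.mpr ⟨hc₁t, hc₂t⟩, hct⟩, hc⟩
  have hTcard : (T.card : ℝ) ≤ C₁ * C₂ * D * (R/r) ^ (s₁ + s₂) := by
    have h1 : T.card ≤ t₁.card * t₂.card * D := by
      calc T.card ≤ ∑ p ∈ t₁ ×ˢ t₂, (u p).card := Finset.card_biUnion_le
        _ ≤ (t₁ ×ˢ t₂).card * D :=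
            Finset.sum_le_card_nsmul _ _ D fun p _ => hu2 p
        _ = t₁.card * t₂.card * D := by rw [Finset.card_product]
    have h2 : ((t₁.card * t₂.card * D : ℕ) : ℝ)
        ≤ (C₁ * (R/r) ^ s₁) * (C₂ * (R/r) ^ s₂) * D := by
      push_cast
      have hm1 : (t₁.card : ℝ) * t₂.card ≤ (C₁ * (R/r) ^ s₁) * (C₂ * (R/r) ^ s₂) :=
        mul_le_mul hcard₁ hcard₂ (Nat.cast_nonneg _) (by positivity)
      exact mul_le_mul_of_nonneg_right hm1 (Nat.cast_nonneg D)
    have h3 : (C₁ * (R/r) ^ s₁) * (C₂ * (R/r) ^ s₂) * D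
        = C₁ * C₂ * D * (R/r) ^ (s₁ + s₂) := by
      rw [Real.rpow_add hRrpos]
      ring
    calc (T.card : ℝ) ≤ ((t₁.card * t₂.card * D : ℕ) : ℝ) := by exact_mod_cast h1
      _ ≤ (C₁ * (R/r) ^ s₁) * (C₂ * (R/r) ^ s₂) * D := h2
      _ = C₁ * C₂ * D * (R/r) ^ (s₁ + s₂) := h3
  calc (coveringNumber r (closedBall z₀ R ∩ P) : ℝ≥0∞)
      ≤ ((T.card : ℕ∞) : ℝ≥0∞) := by
        exact_mod_cast coveringNumber_le_card T hcov
    _ = ENNReal.ofReal (T.card : ℝ) := by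
        rw [ENat.toENNReal_coe, ENNReal.ofReal_natCast]
    _ ≤ ENNReal.ofReal (C₁ * C₂ * D * (R/r) ^ (s₁ + s₂)) :=
        ENNReal.ofReal_le_ofReal hTcard

lemma assouadSpectrum_prodSet_le (m n : ℕ) (E : Set (EuclideanSpace ℝ (Fin m)))
    (F : Set (EuclideanSpace ℝ (Fin n))) {θ : ℝ} (hθ : 0 < θ) (hθ1 : θ ≤ 1) :
    assouadSpectrum θ {z : EuclideanSpace ℝ (Fin (m + n)) |
        ((WithLp.toLp 2 (fun i => z (Fin.castAdd n i)) : EuclideanSpace ℝ (Fin m)) ∈ E) ∧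
        ((WithLp.toLp 2 (fun j => z (Fin.natAdd m j)) : EuclideanSpace ℝ (Fin n)) ∈ F)}
      ≤ assouadSpectrum θ E + assouadSpectrum θ F := by
  refine le_of_forall_pos_le_add fun ε hε => ?_
  have hε2 : 0 < ε/2 := by linarith
  have hmem := prod_mem_specSet m n E F hθ hθ1
    (add_pos_mem_specSet m E hθ hθ1 hε2) (add_pos_mem_specSet n F hθ hθ1 hε2)
  have hle := csInf_le (⟨0, fun x hx => hx.1⟩ :
      BddBelow (specSet θ {z : EuclideanSpace ℝ (Fin (m + n)) |
        ((WithLp.toLp 2 (fun i => z (Fin.castAdd n i)) : EuclideanSpace ℝ (Fin m)) ∈ E) ∧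
        ((WithLp.toLp 2 (fun j => z (Fin.natAdd m j)) : EuclideanSpace ℝ (Fin n)) ∈ F)})) hmem
  rw [assouadSpectrum_eq]
  linarith

/-- Subadditivity of the generalized upper box dimension under Cartesian products,
where `E × F` is realised inside `ℝ^{m+n}` via the first `m` and last `n` coordinates. -/
theorem genUpperBoxDim_prod_le
    (m n : ℕ) (E : Set (EuclideanSpace ℝ (Fin m))) (F : Set (EuclideanSpace ℝ (Fin n))) :
    genUpperBoxDim {z : EuclideanSpace ℝ (Fin (m + n)) |
        ((WithLp.toLp 2 (fun i => z (Fin.castAdd n i)) : EuclideanSpace ℝ (Fin m)) ∈ E) ∧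
        ((WithLp.toLp 2 (fun j => z (Fin.natAdd m j)) : EuclideanSpace ℝ (Fin n)) ∈ F)}
      ≤ genUpperBoxDim E + genUpperBoxDim F := by
  classical
  set P : Set (EuclideanSpace ℝ (Fin (m + n))) := {z : EuclideanSpace ℝ (Fin (m + n)) |
        ((WithLp.toLp 2 (fun i => z (Fin.castAdd n i)) : EuclideanSpace ℝ (Fin m)) ∈ E) ∧
        ((WithLp.toLp 2 (fun j => z (Fin.natAdd m j)) : EuclideanSpace ℝ (Fin n)) ∈ F)} with hP_def
  have hIoo : ∀ᶠ θ in 𝓝[>] (0:ℝ), θ ∈ Ioo (0:ℝ) 1 :=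
    Ioo_mem_nhdsGT_of_mem ⟨le_refl 0, zero_lt_one⟩
  set f : ℝ → ℝ := fun θ => assouadSpectrum θ E with hf_def
  set g : ℝ → ℝ := fun θ => assouadSpectrum θ F with hg_def
  set h : ℝ → ℝ := fun θ => assouadSpectrum θ P with hh_def
  have hev : ∀ᶠ θ in 𝓝[>] (0:ℝ), h θ ≤ (f + g) θ := by
    filter_upwards [hIoo] with θ hθ
    exact assouadSpectrum_prodSet_le m n E F hθ.1 hθ.2.le
  have hf_ub : IsBoundedUnder (· ≤ ·) (𝓝[>] (0:ℝ)) f := by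
    refine ⟨(m:ℝ), ?_⟩
    rw [eventually_map]
    filter_upwards [hIoo] with θ hθ
    exact assouadSpectrum_le_dim m E hθ.1 hθ.2.le
  have hg_ub : IsBoundedUnder (· ≤ ·) (𝓝[>] (0:ℝ)) g := by
    refine ⟨(n:ℝ), ?_⟩
    rw [eventually_map]
    filter_upwards [hIoo] with θ hθ
    exact assouadSpectrum_le_dim n F hθ.1 hθ.2.le
  have hfg_ub : IsBoundedUnder (· ≤ ·) (𝓝[>] (0:ℝ)) (f + g) := by
    refine ⟨(m:ℝ) + n, ?_⟩
    rw [eventually_map]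
    filter_upwards [hIoo] with θ hθ
    exact add_le_add (assouadSpectrum_le_dim m E hθ.1 hθ.2.le)
      (assouadSpectrum_le_dim n F hθ.1 hθ.2.le)
  have hf_lb : IsBoundedUnder (· ≥ ·) (𝓝[>] (0:ℝ)) f :=
    ⟨0, eventually_map.mpr (Eventually.of_forall fun θ => assouadSpectrum_nonneg θ E)⟩
  have hg_lb : IsBoundedUnder (· ≥ ·) (𝓝[>] (0:ℝ)) g :=
    ⟨0, eventually_map.mpr (Eventually.of_forall fun θ => assouadSpectrum_nonneg θ F)⟩
  have hh_lb : IsBoundedUnder (· ≥ ·) (𝓝[>] (0:ℝ)) h :=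
    ⟨0, eventually_map.mpr (Eventually.of_forall fun θ => assouadSpectrum_nonneg θ P)⟩
  have hh_cb : IsCoboundedUnder (· ≤ ·) (𝓝[>] (0:ℝ)) h :=
    hh_lb.isCoboundedUnder_le
  have hg_cb : IsCoboundedUnder (· ≤ ·) (𝓝[>] (0:ℝ)) g :=
    hg_lb.isCoboundedUnder_le
  have hstep1 : limsup h (𝓝[>] (0:ℝ)) ≤ limsup (f + g) (𝓝[>] (0:ℝ)) :=
    limsup_le_limsup hev hh_cb hfg_ub
  have hstep2 : limsup (f + g) (𝓝[>] (0:ℝ)) ≤ limsup f (𝓝[>] (0:ℝ)) + limsup g (𝓝[>] (0:ℝ)) :=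
    limsup_add_le hf_lb hf_ub hg_cb hg_ub
  exact le_trans hstep1 hstep2

end
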